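/- For any M-periodic real sequences (ρ_i) with ρ_i > 0 and (v_i), Σ_{i=1}^M sign(v_i − v_{i−1}) · (ρ_i²(v_{i+1} − v_i) − ρ_{i−1}²(v_i − v_{i−1})) ≤ 0, where the first periodic rearrangement gives Σ_i [sign(v_i − v_{i−1}) ρ_i²(v_{i+1} − v_i) − ρ_i²|v_{i+1} − v_i|] ≤ 0. -/
import Mathlib


open Finset

lemma sign_abs_le (a : ℝ) : |Real.sign a| ≤ 1 := by
  rcases lt_trichotomy a 0 with h | h | h
  · rw [Real.sign_of_neg h]; norm_num
  · rw [h, Real.sign_zero]; norm_num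
  · rw [Real.sign_of_pos h]; norm_num

lemma sign_mul_le_abs (a b : ℝ) : Real.sign a * b ≤ |b| := by
  calc Real.sign a * b ≤ |Real.sign a * b| := le_abs_self _
    _ = |Real.sign a| * |b| := abs_mul _ _
    _ ≤ 1 * |b| := by
        exact mul_le_mul_of_nonneg_right (sign_abs_le a) (abs_nonneg b)
    _ = |b| := one_mul _

lemma sign_mul_self' (a : ℝ) : Real.sign a * a = |a| := by
  rcases lt_trichotomy a 0 with h | h | h
  · rw [Real.sign_of_neg h, abs_of_neg h]; ring
  · simp [h]
  · rw [Real.sign_of_pos h, abs_of_pos h]; ring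

/-- Key algebraic inequality for the discrete BV bound in the local FtL model:
`∑_{i=1}^M sign(v_i − v_{i−1}) (ρ_i² (v_{i+1} − v_i) − ρ_{i−1}² (v_i − v_{i−1}))` -/
theorem stmt_13 (M : ℕ) (hM : 1 ≤ M) (ρ v : ℤ → ℝ)
    (hperρ : ∀ i : ℤ, ρ (i + M) = ρ i) (hperv : ∀ i : ℤ, v (i + M) = v i)
    (hρpos : ∀ i : ℤ, 0 < ρ i) :
    ∑ i ∈ Finset.Icc (1:ℤ) (M:ℤ),
        Real.sign (v i - v (i - 1)) *
          ((ρ i) ^ 2 * (v (i + 1) - v i) - (ρ (i - 1)) ^ 2 * (v i - v (i - 1)))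
      ≤ 0 := by
  set g : ℤ → ℝ := fun j => (ρ j) ^ 2 * |v (j + 1) - v j| with hg
  have hgper : ∀ j : ℤ, g (j + M) = g j := by
    intro j
    simp only [hg]
    have h1 : (j + M : ℤ) + 1 = (j + 1) + M := by ring
    rw [h1, hperρ, hperv, hperv]
  -- pointwise rewrite
  have hpt : ∀ i : ℤ,
      Real.sign (v i - v (i - 1)) *
        ((ρ i) ^ 2 * (v (i + 1) - v i) - (ρ (i - 1)) ^ 2 * (v i - v (i - 1)))
      = Real.sign (v i - v (i - 1)) * ((ρ i) ^ 2 * (v (i + 1) - v i)) - g (i - 1) := by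
    intro i
    have h2 : g (i - 1) = (ρ (i - 1)) ^ 2 * |v i - v (i - 1)| := by
      simp only [hg, sub_add_cancel]
    rw [h2]
    have h3 : (ρ (i - 1)) ^ 2 * |v i - v (i - 1)|
        = Real.sign (v i - v (i - 1)) * ((ρ (i - 1)) ^ 2 * (v i - v (i - 1))) := by
      rw [show Real.sign (v i - v (i - 1)) * ((ρ (i - 1)) ^ 2 * (v i - v (i - 1)))
          = (ρ (i - 1)) ^ 2 * (Real.sign (v i - v (i - 1)) * (v i - v (i - 1))) by ring,
        sign_mul_self']
    rw [h3]; ring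
  rw [Finset.sum_congr rfl (fun i _ => hpt i), Finset.sum_sub_distrib]
  -- first sum ≤ ∑ g i
  have h1 : ∑ i ∈ Finset.Icc (1:ℤ) (M:ℤ),
      Real.sign (v i - v (i - 1)) * ((ρ i) ^ 2 * (v (i + 1) - v i))
      ≤ ∑ i ∈ Finset.Icc (1:ℤ) (M:ℤ), g i := by
    apply Finset.sum_le_sum
    intro i _
    have := sign_mul_le_abs (v i - v (i - 1)) ((ρ i) ^ 2 * (v (i + 1) - v i))
    calc Real.sign (v i - v (i - 1)) * ((ρ i) ^ 2 * (v (i + 1) - v i))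
        ≤ |(ρ i) ^ 2 * (v (i + 1) - v i)| := this
      _ = (ρ i) ^ 2 * |v (i + 1) - v i| := by
          rw [abs_mul, abs_of_nonneg (by positivity : (0:ℝ) ≤ (ρ i) ^ 2)]
  -- second sum equals ∑ g i via reindexing
  have h2 : ∑ i ∈ Finset.Icc (1:ℤ) (M:ℤ), g (i - 1)
      = ∑ i ∈ Finset.Icc (1:ℤ) (M:ℤ), g i := by
    have hshift : ∑ i ∈ Finset.Icc (1:ℤ) (M:ℤ), g (i - 1)
        = ∑ j ∈ Finset.Icc (0:ℤ) ((M:ℤ) - 1), g j := by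
      refine Finset.sum_bij' (fun i _ => i - 1) (fun j _ => j + 1) ?_ ?_ ?_ ?_ ?_
      · intro a ha; simp only [Finset.mem_Icc] at ha ⊢; omega
      · intro a ha; simp only [Finset.mem_Icc] at ha ⊢; omega
      · intro a ha; ring
      · intro a ha; ring
      · intro a ha; rfl
    rw [hshift]
    have hM' : (1:ℤ) ≤ (M:ℤ) := by exact_mod_cast hM
    have e1 : Finset.Icc (0:ℤ) ((M:ℤ) - 1) = insert 0 (Finset.Icc (1:ℤ) ((M:ℤ) - 1)) := by
      ext x; simp only [Finset.mem_Icc, Finset.mem_insert]; omega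
    have e2 : Finset.Icc (1:ℤ) (M:ℤ) = insert (M:ℤ) (Finset.Icc (1:ℤ) ((M:ℤ) - 1)) := by
      ext x; simp only [Finset.mem_Icc, Finset.mem_insert]; omega
    rw [e1, e2, Finset.sum_insert (by simp), Finset.sum_insert (by simp [Finset.mem_Icc])]
    have : g 0 = g (M:ℤ) := by
      have := hgper 0; rw [zero_add] at this; exact this.symm
    rw [this]
  rw [h2]
  linarith
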